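/- Let Δ ≥ δ ≥ 1 be integers. Every finite simple graph G with minimum degree at least δ and maximum degree at most Δ satisfies R(G) ≥ (√(δ·Δ)/(δ+Δ))·|G|, where R(G) = ∑_{uv ∈ E(G)} (d(u)·d(v))^{-1/2} is the Randić index and |G| is the number of vertices. -/
import Mathlib

open Finset

private lemma my_dart_sum {V : Type*} [Fintype V] [DecidableEq V] (G : SimpleGraph V)
    [DecidableRel G.Adj] (g : V → ℝ) :
    ∑ d : G.Dart, g d.fst = ∑ v, (G.degree v : ℝ) * g v := by
  rw [← Finset.sum_fiberwise univ (fun d : G.Dart => d.fst) (fun d => g d.fst)]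
  refine Finset.sum_congr rfl fun v _ => ?_
  rw [Finset.sum_congr rfl (fun d hd => by simp only [mem_filter] at hd; rw [hd.2]),
    Finset.sum_const, nsmul_eq_mul]
  congr 2
  exact G.dart_fst_fiber_card_eq_degree v

private lemma my_edge_sum {V : Type*} [Fintype V] [DecidableEq V] (G : SimpleGraph V)
    [DecidableRel G.Adj] (g : V → ℝ) :
    ∑ e ∈ G.edgeFinset, Sym2.lift ⟨fun u v => g u + g v, fun u v => add_comm _ _⟩ e
      = ∑ d : G.Dart, g d.fst := by
  rw [← Finset.sum_fiberwise_of_maps_to (t := G.edgeFinset) (g := fun d : G.Dart => d.edge)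
      (fun d _ => by rw [SimpleGraph.mem_edgeFinset]; exact d.edge_mem) (fun d => g d.fst)]
  refine Finset.sum_congr rfl fun e he => ?_
  rw [SimpleGraph.mem_edgeFinset] at he
  induction' e with u v
  let d : G.Dart := ⟨(u, v), he⟩
  have hfib : (univ.filter fun d' : G.Dart => d'.edge = s(u,v)) = {d, d.symm} := d.edge_fiber
  rw [hfib, Finset.sum_insert (by simpa [Finset.mem_singleton] using d.symm_ne.symm),
    Finset.sum_singleton]
  simp [d]

private lemma my_key (a b x y : ℝ) (ha : 1 ≤ a) (hab : a ≤ b) (hx1 : a ≤ x) (hx2 : x ≤ b)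
    (hy1 : a ≤ y) (hy2 : y ≤ b) :
    Real.sqrt (a * b) / (a + b) * (1 / x + 1 / y) ≤ (x * y) ^ (-(1 / 2) : ℝ) := by
  have hx : 0 < x := by linarith
  have hy : 0 < y := by linarith
  have ha0 : 0 < a := by linarith
  have hb0 : 0 < b := by linarith
  have hkey : Real.sqrt (a * b) * (x + y) ≤ (a + b) * Real.sqrt (x * y) := by
    have h1 : Real.sqrt (a * b) * (x + y) = Real.sqrt (a * b * (x + y) ^ 2) := by
      rw [show a * b * (x + y) ^ 2 = (Real.sqrt (a * b) * (x + y)) ^ 2 by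
        rw [mul_pow, Real.sq_sqrt (by positivity)], Real.sqrt_sq (by positivity)]
    have h2 : (a + b) * Real.sqrt (x * y) = Real.sqrt ((a + b) ^ 2 * (x * y)) := by
      rw [show (a + b) ^ 2 * (x * y) = ((a + b) * Real.sqrt (x * y)) ^ 2 by
        rw [mul_pow, Real.sq_sqrt (by positivity)], Real.sqrt_sq (by positivity)]
    rw [h1, h2]
    apply Real.sqrt_le_sqrt
    have t1 : a * x ≤ b * y := by nlinarith
    have t2 : a * y ≤ b * x := by nlinarith
    nlinarith [mul_nonneg (sub_nonneg.2 t1) (sub_nonneg.2 t2)]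
  have hxy : (0:ℝ) < x * y := by positivity
  have hs : (0:ℝ) < Real.sqrt (x * y) := Real.sqrt_pos.2 hxy
  have hr : (x * y) ^ (-(1 / 2) : ℝ) = 1 / Real.sqrt (x * y) := by
    rw [Real.rpow_neg hxy.le, one_div, Real.sqrt_eq_rpow]; norm_num
  rw [hr]
  have h : Real.sqrt (a * b) / (a + b) * (1 / x + 1 / y)
      = Real.sqrt (a * b) * (x + y) / ((a + b) * (x * y)) := by
    field_simp; ring
  rw [h, div_le_div_iff₀ (by positivity) hs, one_mul]
  calc Real.sqrt (a * b) * (x + y) * Real.sqrt (x * y)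
      ≤ (a + b) * Real.sqrt (x * y) * Real.sqrt (x * y) :=
        mul_le_mul_of_nonneg_right hkey hs.le
    _ = (a + b) * (x * y) := by rw [mul_assoc, Real.mul_self_sqrt hxy.le]

/-- **Theorem (O–Shi lower bound for the Randić index).**
Every graph `G` with minimum degree at least `δ ≥ 1` and maximum degree at most `Δ`
satisfies `R(G) ≥ (√(δ·Δ)/(δ+Δ))·|G|`, where
`R(G) = ∑_{uv ∈ E(G)} (d(u)·d(v))^{-1/2}`. -/
theorem randic_index_lower_bound {V : Type*} [Fintype V] [DecidableEq V]
    (G : SimpleGraph V) [DecidableRel G.Adj]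
    (δ Δ : ℕ) (hδ : 1 ≤ δ) (hδΔ : δ ≤ Δ)
    (hmindeg : ∀ v : V, δ ≤ G.degree v) (hmaxdeg : ∀ v : V, G.degree v ≤ Δ) :
    Real.sqrt ((δ : ℝ) * Δ) / ((δ : ℝ) + Δ) * Fintype.card V ≤
      ∑ e ∈ G.edgeFinset,
        Sym2.lift ⟨fun u v => ((G.degree u : ℝ) * (G.degree v : ℝ)) ^ (-(1 / 2) : ℝ),
          fun u v => by simp [mul_comm]⟩ e := by
  set c : ℝ := Real.sqrt ((δ : ℝ) * Δ) / ((δ : ℝ) + Δ) with hc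
  have hdegpos : ∀ v : V, (0:ℝ) < G.degree v := fun v => by
    have := hmindeg v
    have : 1 ≤ G.degree v := le_trans hδ this
    exact_mod_cast Nat.lt_of_lt_of_le Nat.zero_lt_one this
  have h1 : (Fintype.card V : ℝ) = ∑ v : V, (G.degree v : ℝ) * (1 / G.degree v) := by
    rw [Finset.sum_congr rfl fun v _ => mul_one_div_cancel (hdegpos v).ne']
    rw [Finset.sum_const, Finset.card_univ, nsmul_eq_mul, mul_one]
  have h2 := my_edge_sum G (fun v => 1 / (G.degree v : ℝ))
  have h3 := my_dart_sum G (fun v => 1 / (G.degree v : ℝ))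
  have hmain : c * Fintype.card V =
      ∑ e ∈ G.edgeFinset, c * Sym2.lift
        ⟨fun u v => 1 / (G.degree u : ℝ) + 1 / (G.degree v : ℝ),
         fun u v => add_comm _ _⟩ e := by
    rw [← Finset.mul_sum, h2, h3, ← h1]
  rw [hmain]
  refine Finset.sum_le_sum fun e _ => ?_
  induction' e with u v
  simp only [Sym2.lift_mk]
  rw [hc]
  exact my_key (δ : ℝ) (Δ : ℝ) (G.degree u) (G.degree v)
    (by exact_mod_cast hδ) (by exact_mod_cast hδΔ)
    (by exact_mod_cast hmindeg u) (by exact_mod_cast hmaxdeg u)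
    (by exact_mod_cast hmindeg v) (by exact_mod_cast hmaxdeg v)
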